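/- Let {A_1,...,A_m} be an (n,m,k,λ)-SEDF with m ≥ 3, λ ≥ 2, k ≥ λ+1. Fix v ∈ A_1 and let I = {v - a : a ∈ A_1, a ≠ v}. Then for every v' ∈ A_i with i ≠ 1, the set E_{v'} = {v' - a : a ∈ A_j, j ≠ 1, j ≠ i} satisfies |E_{v'} ∩ I| ≤ λ - 1. -/

import Mathlib

open Finset

/-- The multiset of external differences `{x - y : x ∈ A, y ∈ B}`. -/
def extDiffs {G : Type*} [AddCommGroup G] [DecidableEq G] (A B : Finset G) : Multiset G :=
  (A ×ˢ B).val.map (fun p => p.1 - p.2)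

/-- An `(n, m, k, λ)`-strong external difference family in `G` (with `n = |G|`):
`m ≥ 2` disjoint `k`-subsets such that for each `i` the multiset of external
differences from `A i` equals `λ` copies of `G \ {0}`. -/
def IsSEDF {G : Type*} [AddCommGroup G] [Fintype G] [DecidableEq G]
    (m k l : ℕ) (A : Fin m → Finset G) : Prop :=
  2 ≤ m ∧ (∀ i, (A i).card = k) ∧
  (∀ i j, i ≠ j → Disjoint (A i) (A j)) ∧
  ∀ i, (∑ j ∈ Finset.univ.erase i, extDiffs (A i) (A j))
      = l • (Finset.univ.erase (0 : G)).val

theorem stmt7 {G : Type*} [AddCommGroup G] [Fintype G] [DecidableEq G]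
    {m k l : ℕ} {A : Fin m → Finset G} (h : IsSEDF m k l A)
    (hm : 3 ≤ m) (hl : 2 ≤ l) (hk : l + 1 ≤ k)
    (i₀ : Fin m) (v : G) (hv : v ∈ A i₀)
    (i : Fin m) (hi : i ≠ i₀) (v' : G) (hv' : v' ∈ A i) :
    ((((Finset.univ.erase i₀).erase i).biUnion
        (fun j => (A j).image (fun a => v' - a))) ∩
      ((A i₀).erase v).image (fun a => v - a)).card ≤ l - 1 := by
  obtain ⟨-, hcard, hdisj, hsum⟩ := h
  set x : G := v - v' with hxdef
  have hvne : v ≠ v' := by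
    intro e
    exact Finset.disjoint_left.mp (hdisj i₀ i (Ne.symm hi)) hv (e ▸ hv')
  have hx0 : x ≠ 0 := sub_ne_zero.mpr hvne
  set U : Finset (G × G) := (Finset.univ.erase i₀).biUnion
    (fun j => (A i₀ ×ˢ A j).filter (fun p => x = p.1 - p.2)) with hU
  have hUcard : U.card = l := by
    rw [hU, Finset.card_biUnion]
    · have h1 : ∀ j ∈ Finset.univ.erase i₀,
          ((A i₀ ×ˢ A j).filter (fun p => x = p.1 - p.2)).card
            = Multiset.count x (extDiffs (A i₀) (A j)) := by
        intro j _
        rw [extDiffs, Multiset.count_map]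
        rfl
      rw [Finset.sum_congr rfl h1, ← Multiset.count_sum', hsum i₀,
        Multiset.count_nsmul]
      have hmem : x ∈ (Finset.univ.erase (0 : G)).val := by
        rw [Finset.mem_val]
        exact Finset.mem_erase.mpr ⟨hx0, Finset.mem_univ x⟩
      rw [Multiset.count_eq_one_of_mem (Finset.univ.erase (0 : G)).nodup hmem, mul_one]
    · intro j hj j' hj' hne
      rw [Function.onFun, Finset.disjoint_left]
      intro p hp hp'
      have h2 := (Finset.mem_product.mp (Finset.mem_filter.mp hp).1).2
      have h2' := (Finset.mem_product.mp (Finset.mem_filter.mp hp').1).2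
      exact Finset.disjoint_left.mp (hdisj j j' hne) h2 h2'
  have hvv'U : (v, v') ∈ U := by
    rw [hU, Finset.mem_biUnion]
    exact ⟨i, Finset.mem_erase.mpr ⟨hi, Finset.mem_univ i⟩,
      Finset.mem_filter.mpr ⟨Finset.mem_product.mpr ⟨hv, hv'⟩, rfl⟩⟩
  set f : G → G × G := fun d => (v - d, v' - d) with hf
  have hinj : Function.Injective f := by
    intro a b hab
    have h1 : v - a = v - b := congrArg Prod.fst hab
    exact sub_right_injective h1
  set S := ((((Finset.univ.erase i₀).erase i).biUnion
        (fun j => (A j).image (fun a => v' - a))) ∩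
      ((A i₀).erase v).image (fun a => v - a)) with hS
  have hsub : S.image f ⊆ U.erase (v, v') := by
    intro t ht
    obtain ⟨d, hd, rfl⟩ := Finset.mem_image.mp ht
    rw [hS, Finset.mem_inter] at hd
    obtain ⟨hd1, hd2⟩ := hd
    obtain ⟨j, hj, hdj⟩ := Finset.mem_biUnion.mp hd1
    obtain ⟨b, hb, hbd⟩ := Finset.mem_image.mp hdj
    obtain ⟨a, ha, had⟩ := Finset.mem_image.mp hd2
    obtain ⟨hane, haA⟩ := Finset.mem_erase.mp ha
    have hfa : v - d = a := by rw [← had]; abel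
    have hfb : v' - d = b := by rw [← hbd]; abel
    refine Finset.mem_erase.mpr ⟨?_, ?_⟩
    · intro e
      have : v - d = v := congrArg Prod.fst e
      rw [hfa] at this
      exact hane this
    · rw [hU, Finset.mem_biUnion]
      obtain ⟨hji, hj0⟩ := Finset.mem_erase.mp hj
      refine ⟨j, hj0, Finset.mem_filter.mpr ⟨?_, ?_⟩⟩
      · rw [Finset.mem_product]
        simp only [hf, hfa, hfb]
        exact ⟨haA, hb⟩
      · simp only [hf, hxdef]
        abel
  calc S.card = (S.image f).card := (Finset.card_image_of_injective _ hinj).symm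
    _ ≤ (U.erase (v, v')).card := Finset.card_le_card hsub
    _ = U.card - 1 := Finset.card_erase_of_mem hvv'U
    _ = l - 1 := by rw [hUcard]
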